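/- Let Z ⊆ {0,1}^n be a code of size N with distance distribution (A_w)_{w=0}^n. Then the quadratic discrepancy of Z satisfies D^{L2}(Z) = Λ_n − (1/N)·Σ_{w=1}^n A_w·λ(w), where Λ_n = (n/2^{n+1})·C(2n,n). -/

import Mathlib

/-- The quadratic discrepancy of a code `Z ⊆ {0,1}^n`. -/
noncomputable def disc (n : ℕ) (Z : Finset (Fin n → Bool)) : ℝ :=
  ∑ t ∈ Finset.range (n + 1), ∑ x : Fin n → Bool,
    ((Z.card : ℝ)⁻¹ * ((Z.filter (fun z => hammingDist x z ≤ t)).card : ℝ)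
      - ((2 : ℝ) ^ n)⁻¹ *
          ((Finset.univ.filter (fun z : Fin n → Bool => hammingDist x z ≤ t)).card : ℝ)) ^ 2

/-- The distance distribution `A_w = (1/N)·|{(z,z') ∈ Z×Z : d(z,z') = w}|` of a code. -/
noncomputable def distDistr (n : ℕ) (Z : Finset (Fin n → Bool)) (w : ℕ) : ℝ :=
  (Z.card : ℝ)⁻¹ * (((Z ×ˢ Z).filter (fun p => hammingDist p.1 p.2 = w)).card : ℝ)

/-- `λ(w) = 2^{n−w}·w·C(w−1, ⌈w/2⌉−1)`. -/
noncomputable def lam (n w : ℕ) : ℝ :=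
  (2 : ℝ) ^ (n - w) * w * Nat.choose (w - 1) ((w + 1) / 2 - 1)


open Finset


lemma GC (n : ℕ) (T : Finset (Fin n)) (z : Fin n → Bool) (a : ℕ) :
    (univ.filter fun x : Fin n → Bool => (T.filter fun i => x i ≠ z i).card = a).card
      = T.card.choose a * 2 ^ (n - T.card) := by
  have hcard : ((T.powersetCard a) ×ˢ Tᶜ.powerset).card = T.card.choose a * 2 ^ (n - T.card) := by
    rw [card_product, card_powersetCard, card_powerset, card_compl, Fintype.card_fin]
  rw [← hcard]
  apply card_bij' (fun x _ => (T.filter fun i => x i ≠ z i, Tᶜ.filter fun i => x i ≠ z i))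
    (fun p _ => fun i => if i ∈ p.1 ∪ p.2 then !(z i) else z i)
  · intro x hx
    simp only [mem_filter, mem_univ, true_and] at hx
    simp only [mem_product, mem_powersetCard, mem_powerset]
    exact ⟨⟨filter_subset _ _, hx⟩, filter_subset _ _⟩
  · intro p hp
    simp only [mem_product, mem_powersetCard, mem_powerset] at hp
    obtain ⟨⟨h1, h2⟩, h3⟩ := hp
    simp only [mem_filter, mem_univ, true_and]
    have : (T.filter fun i => (if i ∈ p.1 ∪ p.2 then !(z i) else z i) ≠ z i) = p.1 := by
      ext i
      simp only [mem_filter, mem_union]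
      constructor
      · rintro ⟨hiT, hne⟩
        by_cases h : i ∈ p.1 ∨ i ∈ p.2
        · rcases h with h | h
          · exact h
          · exact absurd (h3 h) (by simp [hiT])
        · simp [h] at hne
      · intro h
        refine ⟨h1 h, ?_⟩
        simp [h, Bool.not_ne_self]
    rw [this, h2]
  · intro x hx
    funext i
    have : (i ∈ (T.filter fun j => x j ≠ z j) ∪ (Tᶜ.filter fun j => x j ≠ z j)) ↔ x i ≠ z i := by
      simp only [mem_union, mem_filter, mem_compl]
      by_cases h : i ∈ T <;> simp [h]
    rw [if_congr this rfl rfl]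
    by_cases h : x i = z i <;> simp [h]
    · revert h; cases x i <;> cases z i <;> simp
  · intro p hp
    simp only [mem_product, mem_powersetCard, mem_powerset] at hp
    obtain ⟨⟨h1, h2⟩, h3⟩ := hp
    have key : ∀ i, ((if i ∈ p.1 ∪ p.2 then !(z i) else z i) ≠ z i) ↔ (i ∈ p.1 ∪ p.2) := by
      intro i
      by_cases h : i ∈ p.1 ∪ p.2 <;> simp [h, Bool.not_ne_self]
    have e1 : (T.filter fun i => (if i ∈ p.1 ∪ p.2 then !(z i) else z i) ≠ z i) = p.1 := by
      ext i
      rw [mem_filter, key i, mem_union]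
      constructor
      · rintro ⟨hiT, h | h⟩
        · exact h
        · exact absurd (h3 h) (by simp [hiT])
      · intro h; exact ⟨h1 h, Or.inl h⟩
    have e2 : (Tᶜ.filter fun i => (if i ∈ p.1 ∪ p.2 then !(z i) else z i) ≠ z i) = p.2 := by
      ext i
      rw [mem_filter, key i, mem_union]
      constructor
      · rintro ⟨hiT, h | h⟩
        · exact absurd (h1 h) (by simpa using hiT)
        · exact h
      · intro h; exact ⟨h3 h, Or.inr h⟩
    exact Prod.ext e1 e2

lemma sphere_card (n : ℕ) (x : Fin n → Bool) (w : ℕ) :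
    (univ.filter fun y : Fin n → Bool => hammingDist x y = w).card = n.choose w := by
  have h : ∀ y : Fin n → Bool, hammingDist x y = ((univ : Finset (Fin n)).filter fun i => y i ≠ x i).card := by
    intro y
    show (univ.filter fun i => x i ≠ y i).card = _
    congr 1
    ext i
    simp [ne_comm]
  simp_rw [h]
  rw [GC n univ x w, card_univ, Fintype.card_fin, Nat.sub_self, pow_zero, mul_one]

/-- Fiberwise sum over the sphere decomposition. -/
lemma FB {M : Type*} [AddCommMonoid M] (n : ℕ) (x : Fin n → Bool) (G : ℕ → M) :
    ∑ y : Fin n → Bool, G (hammingDist x y) = ∑ j ∈ range (n + 1), n.choose j • G j := by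
  rw [← Finset.sum_fiberwise_of_maps_to (t := range (n + 1)) (g := fun y => hammingDist x y)
    (fun y _ => by
      simpa using Nat.lt_succ_of_le (le_trans hammingDist_le_card_fintype (by simp)))
    (fun y => G (hammingDist x y))]
  refine Finset.sum_congr rfl fun j _ => ?_
  rw [Finset.sum_congr rfl (fun y hy => by rw [(Finset.mem_filter.mp hy).2]),
    Finset.sum_const, sphere_card]

lemma ball_card (n : ℕ) (x : Fin n → Bool) (t : ℕ) :
    (univ.filter fun y : Fin n → Bool => hammingDist x y ≤ t).card
      = ∑ j ∈ range (n + 1), n.choose j * (if j ≤ t then 1 else 0) := by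
  rw [card_filter]
  have := FB (M := ℕ) n x (fun d => if d ≤ t then 1 else 0)
  simpa [smul_eq_mul] using this


lemma L1 (w m : ℕ) :
    ∑ a ∈ range (m+1), ((w+1).choose a : ℤ) * ((w+1) - 2*a) = (w+1) * (w.choose m) := by
  induction m with
  | zero => simp
  | succ m ih =>
    rw [Finset.sum_range_succ, ih]
    have h1 : ((w:ℤ)+1) * (w.choose m) = ((w+1).choose (m+1)) * (m+1) := by
      exact_mod_cast Nat.add_one_mul_choose_eq w m
    have h2 : (((w+1).choose (m+1) : ℕ) : ℤ) = w.choose m + w.choose (m+1) := by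
      exact_mod_cast Nat.choose_succ_succ (w) (m)
    push_cast at *
    linear_combination ((w:ℤ)+1) * h2 + 2 * h1

lemma mad_eq (w : ℕ) :
    ∑ a ∈ range (w+1), w.choose a * ((w - 2*a) + (2*a - w))
      = 2 * w * (w-1).choose ((w-1)/2) := by
  have split : ∑ a ∈ range (w+1), w.choose a * ((w - 2*a) + (2*a - w))
      = (∑ a ∈ range (w+1), w.choose a * (w - 2*a))
        + ∑ a ∈ range (w+1), w.choose a * (2*a - w) := by
    rw [← Finset.sum_add_distrib]
    exact Finset.sum_congr rfl fun a _ => by ring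
  have refl : ∑ a ∈ range (w+1), w.choose a * (2*a - w)
      = ∑ a ∈ range (w+1), w.choose a * (w - 2*a) := by
    rw [← Finset.sum_range_reflect (fun a => w.choose a * (2*a - w)) (w+1)]
    refine Finset.sum_congr rfl fun j hj => ?_
    rw [Finset.mem_range] at hj
    have hjw : j ≤ w := by omega
    have e : w + 1 - 1 - j = w - j := by omega
    rw [e, Nat.choose_symm hjw]
    congr 1
    omega
  have Tval : ∑ a ∈ range (w+1), w.choose a * (w - 2*a) = w * (w-1).choose ((w-1)/2) := by
    rcases Nat.eq_zero_or_pos w with h | h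
    · subst h; simp
    · obtain ⟨v, rfl⟩ : ∃ v, w = v + 1 := ⟨w - 1, by omega⟩
      have trunc : ∑ a ∈ range (v+1+1), (v+1).choose a * (v+1 - 2*a)
          = ∑ a ∈ range (v/2+1), (v+1).choose a * (v+1 - 2*a) := by
        symm
        apply Finset.sum_subset
        · apply Finset.range_subset_range.mpr; omega
        · intro a _ ha
          rw [Finset.mem_range, not_lt] at ha
          have : v + 1 - 2*a = 0 := by omega
          rw [this, mul_zero]
      rw [trunc]
      have key := L1 v (v/2)
      have cast_eq : (↑(∑ a ∈ range (v/2+1), (v+1).choose a * (v+1 - 2*a)) : ℤ)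
          = ∑ a ∈ range (v/2+1), ((v+1).choose a : ℤ) * ((v+1) - 2*a) := by
        push_cast
        refine Finset.sum_congr rfl fun a ha => ?_
        rw [Finset.mem_range] at ha
        have : 2*a ≤ v + 1 := by omega
        push_cast [Nat.cast_sub this]
        ring
      have : (↑(∑ a ∈ range (v/2+1), (v+1).choose a * (v+1 - 2*a)) : ℤ)
          = ((v+1) * (v.choose (v/2)) : ℕ) := by
        rw [cast_eq, key]; push_cast; ring
      have := @Nat.cast_injective ℤ _ _ _ _ this
      simpa using this
  rw [split, refl, Tval]
  ring

lemma B3 (n : ℕ) : ∑ s ∈ range (2*n+1), (2*n).choose s * ((n - s) + (s - n))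
    = n * (2*n).choose n := by
  rcases Nat.eq_zero_or_pos n with h | h
  · subst h; simp
  · have E1 := mad_eq (2*n)
    have ptwise : ∑ s ∈ range (2*n+1), (2*n).choose s * ((2*n - 2*s) + (2*s - 2*n))
        = 2 * ∑ s ∈ range (2*n+1), (2*n).choose s * ((n - s) + (s - n)) := by
      rw [Finset.mul_sum]
      refine Finset.sum_congr rfl fun s _ => ?_
      have : (2*n - 2*s) + (2*s - 2*n) = 2 * ((n - s) + (s - n)) := by omega
      rw [this]; ring
    rw [ptwise] at E1
    have hd : (2*n-1)/2 = n - 1 := by omega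
    rw [hd] at E1
    have central : n * (2*n).choose n = 2 * n * (2*n-1).choose (n-1) := by
      obtain ⟨m, rfl⟩ : ∃ m, n = m + 1 := ⟨n - 1, by omega⟩
      have h2n : 2*(m+1) = (2*m+1) + 1 := by ring
      have pascal : (2*(m+1)).choose (m+1) = (2*m+1).choose m + (2*m+1).choose (m+1) := by
        rw [h2n]
        exact Nat.choose_succ_succ (2*m+1) m
      have symm : (2*m+1).choose (m+1) = (2*m+1).choose m := by
        have := Nat.choose_symm (n := 2*m+1) (k := m+1) (by omega)
        simpa [show 2*m+1-(m+1) = m by omega] using this.symm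
      have : (2*(m+1)).choose (m+1) = 2 * (2*m+1).choose m := by omega
      rw [this]
      simp [show 2*(m+1)-1 = 2*m+1 by omega, show m+1-1 = m by omega]
      ring
    linarith [E1, central]

lemma B4 (n : ℕ) : 2 * ∑ i ∈ range (n+1), n.choose i * i = n * 2^n := by
  have h := Finset.sum_range_reflect (fun i => n.choose i * i) (n+1)
  have hrefl : ∑ j ∈ range (n+1), n.choose (n-j) * (n-j) = ∑ i ∈ range (n+1), n.choose i * i := by
    simpa using h
  have key : ∑ j ∈ range (n+1), (n.choose (n-j) * (n-j) + n.choose j * j)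
      = ∑ j ∈ range (n+1), n.choose j * n := by
    refine Finset.sum_congr rfl fun j hj => ?_
    rw [Finset.mem_range] at hj
    have hjn : j ≤ n := by omega
    rw [Nat.choose_symm hjn]
    have e : n - j + j = n := by omega
    calc n.choose j * (n - j) + n.choose j * j = n.choose j * (n - j + j) := by ring
    _ = n.choose j * n := by rw [e]
  rw [two_mul]
  nth_rewrite 1 [← hrefl]
  rw [← Finset.sum_add_distrib, key, ← Finset.sum_mul, Nat.sum_range_choose, mul_comm]

lemma B5 (n : ℕ) : ∑ i ∈ range (n+1), ∑ j ∈ range (n+1),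
    n.choose i * n.choose j * ((i - j) + (j - i)) = n * (2*n).choose n := by
  have inner : ∀ i ∈ range (n+1), ∑ j ∈ range (n+1), n.choose j * ((i - j) + (j - i))
      = ∑ j ∈ range (n+1), n.choose j * ((i + j - n) + (n - (i + j))) := by
    intro i hi
    rw [Finset.mem_range] at hi
    rw [← Finset.sum_range_reflect (fun j => n.choose j * ((i + j - n) + (n - (i + j)))) (n+1)]
    refine Finset.sum_congr rfl fun j hj => ?_
    rw [Finset.mem_range] at hj
    have e : n + 1 - 1 - j = n - j := by omega
    rw [e, Nat.choose_symm (by omega : j ≤ n)]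
    congr 1
    omega
  have step1 : ∑ i ∈ range (n+1), ∑ j ∈ range (n+1),
      n.choose i * n.choose j * ((i - j) + (j - i))
      = ∑ p ∈ (range (n+1)) ×ˢ (range (n+1)),
          n.choose p.1 * n.choose p.2 * ((p.1 + p.2 - n) + (n - (p.1 + p.2))) := by
    rw [Finset.sum_product]
    refine Finset.sum_congr rfl fun i hi => ?_
    have h1 : ∑ j ∈ range (n+1), n.choose i * n.choose j * ((i - j) + (j - i))
        = n.choose i * ∑ j ∈ range (n+1), n.choose j * ((i - j) + (j - i)) := by
      rw [Finset.mul_sum]; exact Finset.sum_congr rfl fun j _ => by ring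
    have h2 : ∑ j ∈ range (n+1), n.choose i * n.choose j * ((i + j - n) + (n - (i + j)))
        = n.choose i * ∑ j ∈ range (n+1), n.choose j * ((i + j - n) + (n - (i + j))) := by
      rw [Finset.mul_sum]; exact Finset.sum_congr rfl fun j _ => by ring
    rw [h1, inner i hi, ← h2]
  rw [step1]
  have maps : ∀ p ∈ (range (n+1)) ×ˢ (range (n+1)), p.1 + p.2 ∈ range (2*n+1) := by
    intro p hp
    rw [Finset.mem_product, Finset.mem_range, Finset.mem_range] at hp
    rw [Finset.mem_range]
    omega
  rw [← Finset.sum_fiberwise_of_maps_to maps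
    (fun p => n.choose p.1 * n.choose p.2 * ((p.1 + p.2 - n) + (n - (p.1 + p.2))))]
  rw [← B3 n]
  refine Finset.sum_congr rfl fun s hs => ?_
  have fib : ∑ p ∈ ((range (n+1)) ×ˢ (range (n+1))).filter (fun p => p.1 + p.2 = s),
      n.choose p.1 * n.choose p.2 * ((p.1 + p.2 - n) + (n - (p.1 + p.2)))
      = (∑ p ∈ ((range (n+1)) ×ˢ (range (n+1))).filter (fun p => p.1 + p.2 = s),
          n.choose p.1 * n.choose p.2) * ((s - n) + (n - s)) := by
    rw [Finset.sum_mul]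
    refine Finset.sum_congr rfl fun p hp => ?_
    rw [Finset.mem_filter] at hp
    rw [hp.2]
  rw [fib]
  have vdm : ∑ p ∈ ((range (n+1)) ×ˢ (range (n+1))).filter (fun p => p.1 + p.2 = s),
      n.choose p.1 * n.choose p.2 = (2*n).choose s := by
    have : (2*n).choose s = (n + n).choose s := by rw [two_mul]
    rw [this, Nat.add_choose_eq]
    apply Finset.sum_subset
    · intro p hp
      rw [Finset.mem_filter] at hp
      rw [Finset.HasAntidiagonal.mem_antidiagonal]
      exact hp.2
    · intro p hp hnp
      rw [Finset.HasAntidiagonal.mem_antidiagonal] at hp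
      rw [Finset.mem_filter, Finset.mem_product] at hnp
      push_neg at hnp
      by_cases h1 : p.1 < n + 1
      · by_cases h2 : p.2 < n + 1
        · exact absurd hp (hnp ⟨Finset.mem_range.mpr h1, Finset.mem_range.mpr h2⟩)
        · rw [Nat.choose_eq_zero_of_lt (show n < p.2 by omega), mul_zero]
      · rw [Nat.choose_eq_zero_of_lt (show n < p.1 by omega), zero_mul]
  rw [vdm]
  ring

lemma sum_dist (n : ℕ) (z : Fin n → Bool) :
    2 * ∑ x : Fin n → Bool, hammingDist x z = n * 2^n := by
  have h1 : ∑ x : Fin n → Bool, hammingDist x z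
      = ∑ i : Fin n, (univ.filter fun x : Fin n → Bool => x i ≠ z i).card := by
    have : ∀ x : Fin n → Bool, hammingDist x z = ∑ i : Fin n, if x i ≠ z i then 1 else 0 := by
      intro x
      show (univ.filter fun i => x i ≠ z i).card = _
      rw [card_filter]
    simp_rw [this]
    rw [Finset.sum_comm]
    refine Finset.sum_congr rfl fun i _ => ?_
    rw [card_filter]
  have h2 : ∀ i : Fin n, (univ.filter fun x : Fin n → Bool => x i ≠ z i).card = 2^(n-1) := by
    intro i
    have key := GC n {i} z 1
    have : (univ.filter fun x : Fin n → Bool => x i ≠ z i)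
        = (univ.filter fun x : Fin n → Bool => (({i} : Finset (Fin n)).filter fun j => x j ≠ z j).card = 1) := by
      ext x
      simp only [mem_filter, mem_univ, true_and, Finset.filter_singleton]
      by_cases h : x i ≠ z i <;> simp [h]
    rw [this, key]
    simp
  rw [h1]
  simp_rw [h2]
  rw [Finset.sum_const, card_univ, Fintype.card_fin, smul_eq_mul]
  cases n with
  | zero => simp
  | succ m =>
    simp only [Nat.add_sub_cancel, pow_succ]
    ring

lemma dist_decomp (n : ℕ) (z z' x : Fin n → Bool) :
    hammingDist x z
        = ((univ.filter fun i => z i ≠ z' i).filter fun i => x i ≠ z i).card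
          + ((univ.filter fun i => z i ≠ z' i)ᶜ.filter fun i => x i ≠ z i).card
      ∧ hammingDist x z'
        = (hammingDist z z'
            - ((univ.filter fun i => z i ≠ z' i).filter fun i => x i ≠ z i).card)
          + ((univ.filter fun i => z i ≠ z' i)ᶜ.filter fun i => x i ≠ z i).card := by
  set S : Finset (Fin n) := univ.filter fun i => z i ≠ z' i with hS
  have hsplit : ∀ Q : Fin n → Prop, ∀ _ : DecidablePred Q,
      (univ.filter fun i => Q i).card = (S.filter fun i => Q i).card + (Sᶜ.filter fun i => Q i).card := by
    intro Q _
    rw [← Finset.card_union_of_disjoint (Finset.disjoint_filter_filter disjoint_compl_right),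
      ← Finset.filter_union, Finset.union_compl]
  constructor
  · exact hsplit _ _
  · have e1 : hammingDist x z' = (S.filter fun i => x i ≠ z' i).card + (Sᶜ.filter fun i => x i ≠ z' i).card :=
      hsplit _ _
    have e2 : (Sᶜ.filter fun i => x i ≠ z' i) = (Sᶜ.filter fun i => x i ≠ z i) := by
      apply Finset.filter_congr
      intro i hi
      rw [Finset.mem_compl, hS, mem_filter] at hi
      have : z i = z' i := by
        by_contra hne
        exact hi ⟨mem_univ i, hne⟩
      rw [this]
    have hb : ∀ (a b c : Bool), b ≠ c → ((a ≠ c) ↔ ¬(a ≠ b)) := by decide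
    have e3 : (S.filter fun i => x i ≠ z' i) = S \ (S.filter fun i => x i ≠ z i) := by
      ext i
      simp only [mem_filter, mem_sdiff]
      constructor
      · rintro ⟨hiS, hxz'⟩
        have hzz : z i ≠ z' i := by
          rw [hS, mem_filter] at hiS
          exact hiS.2
        exact ⟨hiS, fun hc => ((hb (x i) (z i) (z' i) hzz).mp hxz') hc.2⟩
      · rintro ⟨hiS, h⟩
        have hzz : z i ≠ z' i := by
          rw [hS, mem_filter] at hiS
          exact hiS.2
        refine ⟨hiS, (hb (x i) (z i) (z' i) hzz).mpr ?_⟩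
        intro hxz
        exact h ⟨hiS, hxz⟩
    have e4 : (S \ (S.filter fun i => x i ≠ z i)).card = S.card - (S.filter fun i => x i ≠ z i).card :=
      Finset.card_sdiff_of_subset (filter_subset _ _)
    have e5 : S.card = hammingDist z z' := rfl
    rw [e1, e2, e3, e4, e5]

lemma m_formula (n : ℕ) (z z' : Fin n → Bool) :
    2 * ∑ x : Fin n → Bool, max (hammingDist x z) (hammingDist x z')
      = n * 2^n + 2^(n - hammingDist z z') *
          ∑ a ∈ range (hammingDist z z' + 1),
            (hammingDist z z').choose a
              * ((hammingDist z z' - 2*a) + (2*a - hammingDist z z')) := by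
  set S : Finset (Fin n) := univ.filter fun i => z i ≠ z' i with hS
  set w : ℕ := hammingDist z z' with hw
  have hSw : S.card = w := rfl
  set av : (Fin n → Bool) → ℕ := fun x => (S.filter fun i => x i ≠ z i).card with hav
  have key : ∀ x : Fin n → Bool,
      2 * max (hammingDist x z) (hammingDist x z')
        = (hammingDist x z + hammingDist x z') + ((w - 2 * av x) + (2 * av x - w)) := by
    intro x
    obtain ⟨d1, d2⟩ := dist_decomp n z z' x
    have hle : av x ≤ w := by
      rw [← hSw]; exact card_filter_le _ _
    have hax : av x = ((univ.filter fun i => z i ≠ z' i).filter fun i => x i ≠ z i).card := rfl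
    have hbx : hammingDist z z' = w := rfl
    rw [← hax] at d1 d2
    rw [hbx] at d2
    rcases le_total (hammingDist x z) (hammingDist x z') with h | h
    · rw [max_eq_right h]; omega
    · rw [max_eq_left h]; omega
  have split : 2 * ∑ x : Fin n → Bool, max (hammingDist x z) (hammingDist x z')
      = (∑ x : Fin n → Bool, (hammingDist x z + hammingDist x z'))
        + ∑ x : Fin n → Bool, ((w - 2 * av x) + (2 * av x - w)) := by
    rw [Finset.mul_sum, ← Finset.sum_add_distrib]
    exact Finset.sum_congr rfl fun x _ => key x
  have part1 : ∑ x : Fin n → Bool, (hammingDist x z + hammingDist x z') = n * 2^n := by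
    rw [Finset.sum_add_distrib]
    have := sum_dist n z
    have := sum_dist n z'
    omega
  have part2 : ∑ x : Fin n → Bool, ((w - 2 * av x) + (2 * av x - w))
      = 2^(n-w) * ∑ a ∈ range (w + 1), w.choose a * ((w - 2*a) + (2*a - w)) := by
    have maps : ∀ x : Fin n → Bool, x ∈ (univ : Finset (Fin n → Bool)) → av x ∈ range (w+1) := by
      intro x _
      rw [mem_range]
      have : av x ≤ w := by rw [← hSw]; exact card_filter_le _ _
      omega
    rw [← Finset.sum_fiberwise_of_maps_to maps (fun x => (w - 2 * av x) + (2 * av x - w))]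
    rw [Finset.mul_sum]
    refine Finset.sum_congr rfl fun a ha => ?_
    have inner : ∑ x ∈ univ.filter (fun x => av x = a), ((w - 2 * av x) + (2 * av x - w))
        = (univ.filter (fun x : Fin n → Bool => av x = a)).card * ((w - 2*a) + (2*a - w)) := by
      rw [Finset.sum_congr rfl (fun x hx => by rw [(Finset.mem_filter.mp hx).2]), Finset.sum_const,
        smul_eq_mul]
    rw [inner]
    have hcount : (univ.filter (fun x : Fin n → Bool => av x = a)).card = w.choose a * 2 ^ (n - w) := by
      have h := GC n S z a
      rw [hSw] at h
      exact h
    rw [hcount]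
    ring
  rw [split, part1, part2]

lemma m_real (n : ℕ) (z z' : Fin n → Bool) :
    ((∑ x : Fin n → Bool, max (hammingDist x z) (hammingDist x z') : ℕ) : ℝ)
      = n * 2^n / 2 + lam n (hammingDist z z') := by
  set w : ℕ := hammingDist z z' with hw
  have h := m_formula n z z'
  rw [← hw, mad_eq w] at h
  have hcast : 2 * ((∑ x : Fin n → Bool, max (hammingDist x z) (hammingDist x z') : ℕ) : ℝ)
      = n * 2^n + 2^(n-w) * (2 * w * (w-1).choose ((w-1)/2)) := by
    exact_mod_cast congrArg (Nat.cast : ℕ → ℝ) h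
  have hidx : (w + 1) / 2 - 1 = (w - 1) / 2 := by omega
  rw [lam, hidx]
  push_cast at hcast ⊢
  linarith

lemma sum_max_XX (n : ℕ) :
    ∑ y : Fin n → Bool, ∑ y' : Fin n → Bool, ∑ x : Fin n → Bool,
        max (hammingDist x y) (hammingDist x y')
      = 2^n * ∑ i ∈ range (n+1), ∑ j ∈ range (n+1), n.choose i * n.choose j * max i j := by
  have swap : ∑ y : Fin n → Bool, ∑ y' : Fin n → Bool, ∑ x : Fin n → Bool,
        max (hammingDist x y) (hammingDist x y')
      = ∑ x : Fin n → Bool, ∑ y : Fin n → Bool, ∑ y' : Fin n → Bool,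
        max (hammingDist x y) (hammingDist x y') := by
    calc ∑ y : Fin n → Bool, ∑ y' : Fin n → Bool, ∑ x : Fin n → Bool,
        max (hammingDist x y) (hammingDist x y')
        = ∑ y : Fin n → Bool, ∑ x : Fin n → Bool, ∑ y' : Fin n → Bool,
            max (hammingDist x y) (hammingDist x y') :=
          Finset.sum_congr rfl fun y _ => Finset.sum_comm ..
      _ = ∑ x : Fin n → Bool, ∑ y : Fin n → Bool, ∑ y' : Fin n → Bool,
            max (hammingDist x y) (hammingDist x y') := Finset.sum_comm ..
  rw [swap]
  have inner : ∀ x : Fin n → Bool, ∑ y : Fin n → Bool, ∑ y' : Fin n → Bool,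
        max (hammingDist x y) (hammingDist x y')
      = ∑ i ∈ range (n+1), ∑ j ∈ range (n+1), n.choose i * n.choose j * max i j := by
    intro x
    have step1 : ∀ y : Fin n → Bool, ∑ y' : Fin n → Bool, max (hammingDist x y) (hammingDist x y')
        = ∑ j ∈ range (n+1), n.choose j * max (hammingDist x y) j := by
      intro y
      have := FB n x (fun j => max (hammingDist x y) j)
      simpa [smul_eq_mul] using this
    simp_rw [step1]
    rw [Finset.sum_comm]
    refine Finset.sum_congr rfl fun j _ => ?_
    have step2 : ∑ y : Fin n → Bool, n.choose j * max (hammingDist x y) j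
        = n.choose j * ∑ y : Fin n → Bool, max (hammingDist x y) j := by
      rw [Finset.mul_sum]
    rw [step2]
    have step3 : ∑ y : Fin n → Bool, max (hammingDist x y) j
        = ∑ i ∈ range (n+1), n.choose i * max i j := by
      have := FB n x (fun i => max i j)
      simpa [smul_eq_mul] using this
    rw [step3, Finset.mul_sum]
    refine Finset.sum_congr rfl fun i _ => by rw [max_comm]; ring
  simp_rw [inner]
  rw [Finset.sum_const, card_univ, Fintype.card_fun, Fintype.card_bool, Fintype.card_fin,
    smul_eq_mul]

lemma sum_max_CC (n : ℕ) :
    2 * ∑ i ∈ range (n+1), ∑ j ∈ range (n+1), n.choose i * n.choose j * max i j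
      = n * 2^(2*n) + n * (2*n).choose n := by
  have ptwise : ∀ i j : ℕ, 2 * max i j = (i + j) + ((i - j) + (j - i)) := by
    intro i j
    rcases le_total i j with h | h
    · rw [max_eq_right h]; omega
    · rw [max_eq_left h]; omega
  have split : 2 * ∑ i ∈ range (n+1), ∑ j ∈ range (n+1), n.choose i * n.choose j * max i j
      = (∑ i ∈ range (n+1), ∑ j ∈ range (n+1), n.choose i * n.choose j * (i + j))
        + ∑ i ∈ range (n+1), ∑ j ∈ range (n+1), n.choose i * n.choose j * ((i - j) + (j - i)) := by
    rw [Finset.mul_sum, ← Finset.sum_add_distrib]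
    refine Finset.sum_congr rfl fun i _ => ?_
    rw [Finset.mul_sum, ← Finset.sum_add_distrib]
    refine Finset.sum_congr rfl fun j _ => ?_
    rw [show 2 * (n.choose i * n.choose j * max i j) = n.choose i * n.choose j * (2 * max i j) by ring,
      ptwise i j]
    ring
  have part1 : ∑ i ∈ range (n+1), ∑ j ∈ range (n+1), n.choose i * n.choose j * (i + j)
      = n * 2^(2*n) := by
    have expand : ∑ i ∈ range (n+1), ∑ j ∈ range (n+1), n.choose i * n.choose j * (i + j)
        = (∑ i ∈ range (n+1), n.choose i * i) * (∑ j ∈ range (n+1), n.choose j)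
          + (∑ i ∈ range (n+1), n.choose i) * (∑ j ∈ range (n+1), n.choose j * j) := by
      rw [Finset.sum_mul_sum, Finset.sum_mul_sum, ← Finset.sum_add_distrib]
      refine Finset.sum_congr rfl fun i _ => ?_
      rw [← Finset.sum_add_distrib]
      refine Finset.sum_congr rfl fun j _ => by ring
    rw [expand, Nat.sum_range_choose]
    have hB4 := B4 n
    have : (∑ i ∈ range (n+1), n.choose i * i) * 2^n + 2^n * (∑ j ∈ range (n+1), n.choose j * j)
        = (2 * ∑ i ∈ range (n+1), n.choose i * i) * 2^n := by ring
    rw [this, hB4, two_mul, pow_add]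
    ring
  rw [split, part1, B5 n]

def Kt (n t : ℕ) (p : (Fin n → Bool) × (Fin n → Bool)) : ℕ :=
  (univ.filter fun x : Fin n → Bool => hammingDist x p.1 ≤ t ∧ hammingDist x p.2 ≤ t).card

def mm (n : ℕ) (p : (Fin n → Bool) × (Fin n → Bool)) : ℕ :=
  ∑ x : Fin n → Bool, max (hammingDist x p.1) (hammingDist x p.2)

lemma cardX (n : ℕ) : (univ : Finset (Fin n → Bool)).card = 2^n := by
  rw [card_univ, Fintype.card_fun, Fintype.card_bool, Fintype.card_fin]

lemma D1 (n t : ℕ) (Z : Finset (Fin n → Bool)) (hZ : Z.Nonempty) :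
    ∑ x : Fin n → Bool,
      ((Z.card : ℝ)⁻¹ * ((Z.filter (fun z => hammingDist x z ≤ t)).card : ℝ)
        - ((2:ℝ)^n)⁻¹ * ((univ.filter (fun z : Fin n → Bool => hammingDist x z ≤ t)).card : ℝ))^2
    = ((Z.card : ℝ)⁻¹)^2 * (∑ p ∈ Z ×ˢ Z, (Kt n t p : ℝ))
      - (((2:ℝ)^n)⁻¹)^2 *
          (∑ p ∈ (univ ×ˢ univ : Finset ((Fin n → Bool) × (Fin n → Bool))), (Kt n t p : ℝ)) := by
  have hN : (Z.card : ℝ) ≠ 0 := by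
    simp [Finset.card_ne_zero_of_mem hZ.choose_spec]
  have h2n : ((2:ℝ)^n) ≠ 0 := by positivity
  set B : ℕ := ∑ j ∈ range (n + 1), n.choose j * (if j ≤ t then 1 else 0) with hB
  have hball : ∀ x : Fin n → Bool,
      (univ.filter fun z : Fin n → Bool => hammingDist x z ≤ t).card = B := fun x => ball_card n x t
  have hball2 : ∀ z : Fin n → Bool,
      (univ.filter fun x : Fin n → Bool => hammingDist x z ≤ t).card = B := by
    intro z
    rw [hB, ← ball_card n z t]
    congr 1
    apply Finset.filter_congr
    intro x _
    rw [hammingDist_comm]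
  have hA : ∀ (W : Finset (Fin n → Bool)) (x : Fin n → Bool),
      ((W.filter (fun z => hammingDist x z ≤ t)).card : ℝ)
        = ∑ z ∈ W, (if hammingDist x z ≤ t then (1:ℝ) else 0) := by
    intro W x
    rw [card_filter]
    push_cast
    rfl
  have S1gen : ∀ (W : Finset (Fin n → Bool)),
      ∑ x : Fin n → Bool, (∑ z ∈ W, (if hammingDist x z ≤ t then (1:ℝ) else 0))^2
        = ∑ p ∈ W ×ˢ W, (Kt n t p : ℝ) := by
    intro W
    have sq_expand : ∀ x : Fin n → Bool,
        (∑ z ∈ W, (if hammingDist x z ≤ t then (1:ℝ) else 0))^2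
          = ∑ p ∈ W ×ˢ W, (if hammingDist x p.1 ≤ t ∧ hammingDist x p.2 ≤ t then (1:ℝ) else 0) := by
      intro x
      rw [sq, Finset.sum_mul_sum, Finset.sum_product]
      refine Finset.sum_congr rfl fun z _ => ?_
      refine Finset.sum_congr rfl fun z' _ => ?_
      by_cases h1 : hammingDist x z ≤ t <;> by_cases h2 : hammingDist x z' ≤ t <;> simp [h1, h2]
    simp_rw [sq_expand]
    rw [Finset.sum_comm]
    refine Finset.sum_congr rfl fun p _ => ?_
    rw [Kt, card_filter]
    push_cast
    rfl
  have S2 : ∑ x : Fin n → Bool, (∑ z ∈ Z, (if hammingDist x z ≤ t then (1:ℝ) else 0))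
      = (Z.card : ℝ) * B := by
    rw [Finset.sum_comm]
    have hzz : ∀ z ∈ Z, ∑ x : Fin n → Bool, (if hammingDist x z ≤ t then (1:ℝ) else 0) = (B:ℝ) := by
      intro z _
      rw [← hball2 z, card_filter]
      push_cast
      rfl
    rw [Finset.sum_congr rfl hzz, Finset.sum_const, nsmul_eq_mul]
  have S3 : ∑ p ∈ (univ ×ˢ univ : Finset ((Fin n → Bool) × (Fin n → Bool))), (Kt n t p : ℝ)
      = 2^n * (B:ℝ)^2 := by
    rw [← S1gen univ]
    have : ∀ x : Fin n → Bool, ∑ z ∈ univ, (if hammingDist x z ≤ t then (1:ℝ) else 0) = (B:ℝ) := by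
      intro x
      rw [← hball x, card_filter]
      push_cast
      rfl
    simp_rw [this]
    rw [Finset.sum_const, cardX, nsmul_eq_mul]
    push_cast
    ring
  have hballR : ∀ x : Fin n → Bool,
      ((univ.filter (fun z : Fin n → Bool => hammingDist x z ≤ t)).card : ℝ) = (B : ℝ) := by
    intro x; rw [hball x]
  simp_rw [hA Z, hballR]
  have expand : ∀ x : Fin n → Bool,
      ((Z.card : ℝ)⁻¹ * (∑ z ∈ Z, (if hammingDist x z ≤ t then (1:ℝ) else 0))
        - ((2:ℝ)^n)⁻¹ * B)^2
      = ((Z.card : ℝ)⁻¹)^2 * (∑ z ∈ Z, (if hammingDist x z ≤ t then (1:ℝ) else 0))^2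
        - (2 * (Z.card : ℝ)⁻¹ * ((2:ℝ)^n)⁻¹ * B)
            * (∑ z ∈ Z, (if hammingDist x z ≤ t then (1:ℝ) else 0))
        + (((2:ℝ)^n)⁻¹)^2 * (B:ℝ)^2 := by
    intro x; ring
  simp_rw [expand]
  rw [Finset.sum_add_distrib, Finset.sum_sub_distrib, ← Finset.mul_sum, ← Finset.mul_sum,
    S1gen Z, S2, Finset.sum_const, cardX, nsmul_eq_mul, S3]
  push_cast
  field_simp
  ring

lemma kernel (n : ℕ) (p : (Fin n → Bool) × (Fin n → Bool)) :
    (∑ t ∈ range (n+1), Kt n t p) + mm n p = (n+1) * 2^n := by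
  have step1 : ∑ t ∈ range (n+1), Kt n t p
      = ∑ x : Fin n → Bool, ∑ t ∈ range (n+1),
          (if max (hammingDist x p.1) (hammingDist x p.2) ≤ t then 1 else 0) := by
    simp_rw [Kt, card_filter]
    rw [Finset.sum_comm]
    refine Finset.sum_congr rfl fun x _ => Finset.sum_congr rfl fun t _ => ?_
    simp only [max_le_iff]
  have step2 : ∀ x : Fin n → Bool, ∑ t ∈ range (n+1),
      (if max (hammingDist x p.1) (hammingDist x p.2) ≤ t then 1 else 0)
      = n + 1 - max (hammingDist x p.1) (hammingDist x p.2) := by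
    intro x
    rw [← card_filter]
    have : (range (n+1)).filter (fun t => max (hammingDist x p.1) (hammingDist x p.2) ≤ t)
        = Ico (max (hammingDist x p.1) (hammingDist x p.2)) (n+1) := by
      ext u
      simp only [mem_filter, mem_range, mem_Ico]
      omega
    rw [this, Nat.card_Ico]
  have hle : ∀ x : Fin n → Bool, max (hammingDist x p.1) (hammingDist x p.2) ≤ n := by
    intro x
    apply max_le <;>
      exact le_trans hammingDist_le_card_fintype (by simp)
  rw [step1, mm, ← Finset.sum_add_distrib]
  have hsum : ∀ x ∈ (univ : Finset (Fin n → Bool)),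
      (∑ t ∈ range (n+1), (if max (hammingDist x p.1) (hammingDist x p.2) ≤ t then 1 else 0))
        + max (hammingDist x p.1) (hammingDist x p.2) = n + 1 := by
    intro x _
    rw [step2 x]
    have := hle x
    omega
  rw [Finset.sum_congr rfl hsum, Finset.sum_const, cardX, smul_eq_mul, mul_comm]


/-- **Stolarsky's invariance for the Hamming space**:
`D^{L2}(Z) = Λ_n − (1/N)·Σ_{w=1}^n A_w·λ(w)` where `Λ_n = (n/2^{n+1})·C(2n,n)`. -/
theorem stolarsky_invariance_hamming (n : ℕ) (Z : Finset (Fin n → Bool)) (hZ : Z.Nonempty) :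
    disc n Z
      = (n : ℝ) / 2 ^ (n + 1) * Nat.choose (2 * n) n
        - (Z.card : ℝ)⁻¹ * ∑ w ∈ Finset.Icc 1 n, distDistr n Z w * lam n w := by

  have hN : (Z.card : ℝ) ≠ 0 := by
    simp [Finset.card_ne_zero_of_mem hZ.choose_spec]
  have h2n : ((2:ℝ)^n) ≠ 0 := by positivity
  rw [disc]
  rw [Finset.sum_congr rfl (fun t _ => D1 n t Z hZ)]
  rw [Finset.sum_sub_distrib, ← Finset.mul_sum, ← Finset.mul_sum]
  have swap : ∀ (W : Finset ((Fin n → Bool) × (Fin n → Bool))),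
      ∑ t ∈ range (n+1), ∑ p ∈ W, (Kt n t p : ℝ)
        = ∑ p ∈ W, ((∑ t ∈ range (n+1), Kt n t p : ℕ) : ℝ) := by
    intro W
    rw [Finset.sum_comm]
    push_cast
    rfl
  rw [swap, swap]
  have hker : ∀ p : (Fin n → Bool) × (Fin n → Bool),
      ((∑ t ∈ range (n+1), Kt n t p : ℕ) : ℝ) = (n+1) * 2^n - (mm n p : ℝ) := by
    intro p
    have h := kernel n p
    have h2 : ((∑ t ∈ range (n+1), Kt n t p : ℕ) : ℝ) + (mm n p : ℝ) = ((n:ℝ)+1) * 2^n := by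
      exact_mod_cast congrArg (Nat.cast : ℕ → ℝ) h
    linarith
  simp_rw [hker]
  rw [Finset.sum_sub_distrib, Finset.sum_sub_distrib, Finset.sum_const, Finset.sum_const,
    card_product, card_product, cardX]
  -- evaluate the XX mm-sum
  have hXXnat : 2 * ∑ p ∈ (univ ×ˢ univ : Finset ((Fin n → Bool) × (Fin n → Bool))), mm n p
      = 2^n * (n * 2^(2*n) + n * (2*n).choose n) := by
    rw [Finset.sum_product]
    have : ∀ y : Fin n → Bool, ∀ y' : Fin n → Bool, mm n (y, y')
        = ∑ x : Fin n → Bool, max (hammingDist x y) (hammingDist x y') := fun _ _ => rfl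
    simp_rw [this]
    rw [sum_max_XX, ← mul_assoc, mul_comm 2 (2^n), mul_assoc, sum_max_CC]
  have hXX : ∑ p ∈ (univ ×ˢ univ : Finset ((Fin n → Bool) × (Fin n → Bool))), (mm n p : ℝ)
      = 2^n * ((n:ℝ) * 2^(2*n) + n * (2*n).choose n) / 2 := by
    have := congrArg (Nat.cast : ℕ → ℝ) hXXnat
    push_cast at this
    linarith
  -- evaluate the ZZ mm-sum
  have hZZ : ∑ p ∈ Z ×ˢ Z, (mm n p : ℝ)
      = ((Z.card : ℝ) * Z.card) * ((n:ℝ) * 2^n / 2)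
        + ∑ p ∈ Z ×ˢ Z, lam n (hammingDist p.1 p.2) := by
    have hme : ∀ p ∈ Z ×ˢ Z, (mm n p : ℝ) = (n:ℝ) * 2^n / 2 + lam n (hammingDist p.1 p.2) :=
      fun p _ => m_real n p.1 p.2
    rw [Finset.sum_congr rfl hme, Finset.sum_add_distrib, Finset.sum_const, card_product,
      nsmul_eq_mul]
    push_cast
    ring
  have hfib : ∑ p ∈ Z ×ˢ Z, lam n (hammingDist p.1 p.2)
      = ∑ w ∈ range (n+1),
          (((Z ×ˢ Z).filter fun p => hammingDist p.1 p.2 = w).card : ℝ) * lam n w := by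
    have maps : ∀ p ∈ Z ×ˢ Z, hammingDist p.1 p.2 ∈ range (n+1) := by
      intro p _
      rw [mem_range]
      exact Nat.lt_succ_of_le (le_trans hammingDist_le_card_fintype (by simp))
    rw [← Finset.sum_fiberwise_of_maps_to maps (fun p => lam n (hammingDist p.1 p.2))]
    refine Finset.sum_congr rfl fun w _ => ?_
    rw [Finset.sum_congr rfl (fun p hp => by rw [(Finset.mem_filter.mp hp).2]),
      Finset.sum_const, nsmul_eq_mul]
  have hsplit : ∑ w ∈ range (n+1),
        (((Z ×ˢ Z).filter fun p => hammingDist p.1 p.2 = w).card : ℝ) * lam n w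
      = ∑ w ∈ Icc 1 n,
          (((Z ×ˢ Z).filter fun p => hammingDist p.1 p.2 = w).card : ℝ) * lam n w := by
    have h0 : lam n 0 = 0 := by simp [lam]
    have hr : range (n+1) = insert 0 (Icc 1 n) := by
      ext u
      simp only [mem_range, mem_insert, mem_Icc]
      omega
    rw [hr, Finset.sum_insert (by simp), h0, mul_zero, zero_add]
  rw [hZZ, hfib, hsplit, hXX]
  have hdd : ∑ w ∈ Icc 1 n, distDistr n Z w * lam n w
      = (Z.card : ℝ)⁻¹ * ∑ w ∈ Icc 1 n,
          (((Z ×ˢ Z).filter fun p => hammingDist p.1 p.2 = w).card : ℝ) * lam n w := by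
    rw [Finset.mul_sum]
    refine Finset.sum_congr rfl fun w _ => ?_
    rw [distDistr]
    ring
  rw [hdd]
  push_cast
  field_simp
  ring
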